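/- For every R > 1, the measure m_2 (Lebesgue measure restricted to A = {(x,y) : x > 1, 0 < y < 1/x}) of the euclidean ball B_e((R,1),1) is strictly less than 2√2/(R-1)^{3/2}. -/
import Mathlib


open MeasureTheory Real Set

noncomputable section

/-- Open euclidean ball in `ℝ × ℝ` with center `c` and radius `r`. -/
def eBall (c : ℝ × ℝ) (r : ℝ) : Set (ℝ × ℝ) :=
  {p | (p.1 - c.1) ^ 2 + (p.2 - c.2) ^ 2 < r ^ 2}

/-- Open hyperbolic ball (upper half-plane model) with center `w` and radius `s`,
characterized via `cosh (d_h p w) = 1 + |p - w|² / (2 p₂ w₂)`. -/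
def hBall (w : ℝ × ℝ) (s : ℝ) : Set (ℝ × ℝ) :=
  {p | 0 < p.2 ∧ 1 + ((p.1 - w.1) ^ 2 + (p.2 - w.2) ^ 2) / (2 * p.2 * w.2) < Real.cosh s}

/-- The restriction to the upper half plane of the standard Gaussian measure on `ℝ²`. -/
def m1 : Measure (ℝ × ℝ) :=
  (volume.restrict {p : ℝ × ℝ | 0 < p.2}).withDensity
    (fun p => ENNReal.ofReal ((2 * π)⁻¹ * Real.exp (-(p.1 ^ 2 + p.2 ^ 2) / 2)))

/-- The region `A = {(x,y) : x > 1, 0 < y < 1/x}`. -/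
def regA : Set (ℝ × ℝ) := {p | 1 < p.1 ∧ 0 < p.2 ∧ p.2 < p.1⁻¹}

/-- Lebesgue measure restricted to `A`. -/
def m2 : Measure (ℝ × ℝ) := volume.restrict regA

/-- The measure `μ = m₁ + m₂`. -/
def mu : Measure (ℝ × ℝ) := m1 + m2

/-- The centered maximal function of a measure `ν` with respect to `μ`,
using hyperbolic balls. -/
def Mmax (μ ν : Measure (ℝ × ℝ)) (w : ℝ × ℝ) : ENNReal :=
  ⨆ (s : ℝ) (_ : 0 < s), ν (hBall w s) / μ (hBall w s)

lemma eBall_meas (c : ℝ × ℝ) (r : ℝ) : MeasurableSet (eBall c r) := by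
  apply measurableSet_lt <;> fun_prop

lemma rect_bound (R w : ℝ) (hR : 1 < R) (hw : 0 ≤ w)
    (hsub : eBall (R, 1) 1 ∩ regA ⊆ Ioo (R - w) (R + w) ×ˢ Ioo 0 (1 / (R - 1))) :
    m2 (eBall (R, 1) 1) ≤ ENNReal.ofReal (2 * w * (1 / (R - 1))) := by
  have hR1 : (0:ℝ) < R - 1 := by linarith
  have h1 : m2 (eBall (R, 1) 1) = volume (eBall (R, 1) 1 ∩ regA) :=
    Measure.restrict_apply (eBall_meas _ _)
  rw [h1]
  calc volume (eBall (R, 1) 1 ∩ regA)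
      ≤ volume (Ioo (R - w) (R + w) ×ˢ Ioo 0 (1 / (R - 1))) := measure_mono hsub
    _ = ENNReal.ofReal (2 * w * (1 / (R - 1))) := by
        rw [Measure.volume_eq_prod, Measure.prod_prod, Real.volume_Ioo, Real.volume_Ioo,
          ← ENNReal.ofReal_mul (by linarith)]
        congr 1
        ring

theorem stmt4 (R : ℝ) (hR : 1 < R) :
    m2 (eBall (R, 1) 1) <
      ENNReal.ofReal (2 * Real.sqrt 2 / (R - 1) ^ ((3 : ℝ) / 2)) := by
  have hR1 : (0:ℝ) < R - 1 := by linarith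
  have hs2 : (0:ℝ) < Real.sqrt 2 := Real.sqrt_pos.mpr (by norm_num)
  have hsR : (0:ℝ) < Real.sqrt (R - 1) := Real.sqrt_pos.mpr hR1
  have hsR2 : Real.sqrt (R - 1) ^ 2 = R - 1 := Real.sq_sqrt hR1.le
  have h32 : (R - 1) ^ ((3 : ℝ) / 2) = (R - 1) * Real.sqrt (R - 1) := by
    rw [show (3:ℝ)/2 = 1 + 1/2 by norm_num, Real.rpow_add hR1, Real.rpow_one,
      ← Real.sqrt_eq_rpow]
  have htpos : (0:ℝ) < (R - 1) ^ ((3 : ℝ) / 2) := by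
    rw [h32]; positivity
  rcases lt_or_ge R 3 with h3 | h3
  · -- crude rectangle, width 1
    have hsub : eBall (R, 1) 1 ∩ regA ⊆ Ioo (R - 1) (R + 1) ×ˢ Ioo 0 (1 / (R - 1)) := by
      rintro p ⟨hb, hx, hy0, hy⟩
      simp only [eBall, mem_setOf_eq] at hb
      have hxb : (p.1 - R) ^ 2 < 1 := by nlinarith [sq_nonneg (p.2 - 1)]
      have hx1 : R - 1 < p.1 := by nlinarith
      have hx2 : p.1 < R + 1 := by nlinarith
      refine ⟨⟨hx1, hx2⟩, hy0, ?_⟩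
      have : p.1⁻¹ < (R - 1)⁻¹ := by
        apply inv_strictAnti₀ hR1 hx1
      rw [one_div]
      linarith
    refine lt_of_le_of_lt (rect_bound R 1 hR zero_le_one hsub) ?_
    rw [ENNReal.ofReal_lt_ofReal_iff (by positivity)]
    rw [h32, show (2:ℝ) * 1 * (1 / (R - 1)) = 2 / (R - 1) by ring,
      div_lt_div_iff₀ hR1 (by positivity)]
    have hlt : Real.sqrt (R - 1) < Real.sqrt 2 := by
      apply Real.sqrt_lt_sqrt hR1.le; linarith
    nlinarith
  · -- refined rectangle, width √(2R-3)/(R-1)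
    set w : ℝ := Real.sqrt (2 * R - 3) / (R - 1) with hw
    have hwnn : 0 ≤ w := by positivity
    have hw2 : w ^ 2 = (2 * R - 3) / (R - 1) ^ 2 := by
      rw [hw, div_pow, Real.sq_sqrt (by linarith)]
    have hsub : eBall (R, 1) 1 ∩ regA ⊆ Ioo (R - w) (R + w) ×ˢ Ioo 0 (1 / (R - 1)) := by
      rintro p ⟨hb, hx, hy0, hy⟩
      simp only [eBall, mem_setOf_eq] at hb
      have hxb : (p.1 - R) ^ 2 < 1 := by nlinarith [sq_nonneg (p.2 - 1)]
      have hx1 : R - 1 < p.1 := by nlinarith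
      have hyb : p.2 < 1 / (R - 1) := by
        have : p.1⁻¹ < (R - 1)⁻¹ := inv_strictAnti₀ hR1 hx1
        rw [one_div]; linarith
      have hq : p.2 * (R - 1) < 1 := (lt_div_iff₀ hR1).mp hyb
      -- key: (p.1 - R)^2 * (R-1)^2 < 2R - 3
      have hkey : (p.1 - R) ^ 2 * (R - 1) ^ 2 < 2 * R - 3 := by
        have ha : (p.2 - 1) * (R - 1) < 2 - R := by nlinarith
        have hsq : (R - 2) ^ 2 < ((p.2 - 1) * (R - 1)) ^ 2 := by
          nlinarith [mul_pos (show (0:ℝ) < (R - 2) - (p.2 - 1) * (R - 1) by linarith)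
            (show (0:ℝ) < -((p.2 - 1) * (R - 1)) - (R - 2) by linarith)]
        have hb' : (p.1 - R) ^ 2 < 1 - (p.2 - 1) ^ 2 := by linarith
        have h5 : (p.1 - R) ^ 2 * (R - 1) ^ 2 < (1 - (p.2 - 1) ^ 2) * (R - 1) ^ 2 :=
          mul_lt_mul_of_pos_right hb' (by positivity)
        have h6 : (1 - (p.2 - 1) ^ 2) * (R - 1) ^ 2
            = (R - 1) ^ 2 - ((p.2 - 1) * (R - 1)) ^ 2 := by ring
        have h7 : (R - 1) ^ 2 - (R - 2) ^ 2 = 2 * R - 3 := by ring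
        linarith
      have hxw : (p.1 - R) ^ 2 < w ^ 2 := by
        rw [hw2, lt_div_iff₀ (by positivity)]; linarith
      obtain ⟨hw1, hw2'⟩ := abs_lt_of_sq_lt_sq' hxw hwnn
      exact ⟨⟨by linarith, by linarith⟩, hy0, hyb⟩
    refine lt_of_le_of_lt (rect_bound R w hR hwnn hsub) ?_
    rw [ENNReal.ofReal_lt_ofReal_iff (by positivity)]
    rw [h32]
    have hslt : Real.sqrt (2 * R - 3) < Real.sqrt 2 * Real.sqrt (R - 1) := by
      rw [← Real.sqrt_mul (by norm_num : (0:ℝ) ≤ 2)]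
      exact Real.sqrt_lt_sqrt (by linarith) (by linarith)
    have hsnn : 0 ≤ Real.sqrt (2 * R - 3) := Real.sqrt_nonneg _
    rw [show (2:ℝ) * w * (1 / (R - 1)) = 2 * Real.sqrt (2 * R - 3) / ((R - 1) * (R - 1)) by
      rw [hw]; field_simp, div_lt_div_iff₀ (by positivity) (by positivity)]
    have hmul := mul_lt_mul_of_pos_right hslt
      (show (0:ℝ) < 2 * (R - 1) * Real.sqrt (R - 1) by positivity)
    calc 2 * Real.sqrt (2 * R - 3) * ((R - 1) * Real.sqrt (R - 1))
        = Real.sqrt (2 * R - 3) * (2 * (R - 1) * Real.sqrt (R - 1)) := by ring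
      _ < Real.sqrt 2 * Real.sqrt (R - 1) * (2 * (R - 1) * Real.sqrt (R - 1)) := hmul
      _ = 2 * Real.sqrt 2 * ((R - 1) * Real.sqrt (R - 1) ^ 2) := by ring
      _ = 2 * Real.sqrt 2 * ((R - 1) * (R - 1)) := by rw [hsR2]
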